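/- Let P = {p_1,...,p_n} and Q = {q_1,...,q_n} be orthonormal sets in R^d with 100 ≤ n ≤ d/2, and let U = PᵀQ. Suppose there exists a partial coloring ζ ∈ {−1,0,+1}^n with |{i : ζ_i = 0}| ≤ n/4 and |Σ_j ζ_j U_{ij}| ≤ 1/2 for all i. Then the unit vector c obtained by normalizing Q·ζ/√n (extended to unit norm via a direction orthogonal to both spans, which exists since d > 2n) satisfies Σ_{i=1}^n |⟨q_i, c⟩| − Σ_{i=1}^n |⟨p_i, c⟩| ≥ (1/4)√n. -/

import Mathlib

open scoped RealInnerProductSpace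

set_option maxHeartbeats 1000000

theorem stmt_7 {d n : ℕ} (hn : 100 ≤ n) (hd : 2 * n < d)
    (p q : Fin n → EuclideanSpace ℝ (Fin d))
    (hp : Orthonormal ℝ p) (hq : Orthonormal ℝ q)
    (ζ : Fin n → ℝ) (hζ : ∀ i, ζ i = -1 ∨ ζ i = 0 ∨ ζ i = 1)
    (hζ0 : ({i : Fin n | ζ i = 0}.ncard : ℝ) ≤ (n : ℝ) / 4)
    (hdisc : ∀ i, |∑ j, ζ j * ⟪p i, q j⟫| ≤ 1/2) :
    ∃ c : EuclideanSpace ℝ (Fin d), ‖c‖ = 1 ∧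
      (1/4) * Real.sqrt n ≤ (∑ i, |⟪q i, c⟫|) - ∑ i, |⟪p i, c⟫| := by
  classical
  have hn0 : (0:ℕ) < n := by omega
  have hnpos : (0:ℝ) < n := by exact_mod_cast hn0
  set sn : ℝ := Real.sqrt n with hsn_def
  have hsn_pos : 0 < sn := Real.sqrt_pos.mpr hnpos
  have hsn_sq : sn * sn = n := Real.mul_self_sqrt hnpos.le
  -- the vector v = ∑ ζ j • q j
  set v : EuclideanSpace ℝ (Fin d) := ∑ j, ζ j • q j with hv_def
  have hζsq : ∀ i, ζ i * ζ i ≤ 1 := by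
    intro i; rcases hζ i with h | h | h <;> simp [h]
  have hvnorm : ⟪v, v⟫ = ∑ j, ζ j * ζ j := by simpa using hq.inner_sum ζ ζ Finset.univ
  have hvle : ⟪v, v⟫ ≤ n := by
    rw [hvnorm]
    calc ∑ j, ζ j * ζ j ≤ ∑ _j : Fin n, (1:ℝ) := Finset.sum_le_sum fun i _ => hζsq i
    _ = n := by simp
  have hvnn : (0:ℝ) ≤ ⟪v, v⟫ := real_inner_self_nonneg
  -- the span of all p's and q's
  set S : Submodule ℝ (EuclideanSpace ℝ (Fin d)) :=
    Submodule.span ℝ (Set.range (Sum.elim p q)) with hS_def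
  have hSrank : Module.finrank ℝ S ≤ 2 * n := by
    have := finrank_range_le_card (R := ℝ) (Sum.elim p q)
    simpa [Set.finrank, two_mul] using this
  have hpS : ∀ i, p i ∈ S := fun i =>
    Submodule.subset_span ⟨Sum.inl i, rfl⟩
  have hqS : ∀ i, q i ∈ S := fun i =>
    Submodule.subset_span ⟨Sum.inr i, rfl⟩
  have hvS : v ∈ S := Submodule.sum_mem _ fun j _ => Submodule.smul_mem _ _ (hqS j)
  -- find a unit vector orthogonal to S
  have hrank' : Module.finrank ℝ S + Module.finrank ℝ Sᗮ
      = Module.finrank ℝ (EuclideanSpace ℝ (Fin d)) :=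
    Submodule.finrank_add_finrank_orthogonal S
  have hdim : Module.finrank ℝ (EuclideanSpace ℝ (Fin d)) = d := by
    simp [finrank_euclideanSpace]
  have hperp_pos : 0 < Module.finrank ℝ Sᗮ := by omega
  haveI : Nontrivial Sᗮ := Module.finrank_pos_iff.mp hperp_pos
  obtain ⟨w0, hw0⟩ := exists_ne (0 : Sᗮ)
  have hw0' : (w0 : EuclideanSpace ℝ (Fin d)) ≠ 0 := by
    simpa [Submodule.coe_eq_zero] using hw0
  set w : EuclideanSpace ℝ (Fin d) := ‖(w0 : EuclideanSpace ℝ (Fin d))‖⁻¹ • w0 with hw_def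
  have hwnorm : ‖w‖ = 1 := norm_smul_inv_norm hw0'
  have hwperp : w ∈ Sᗮ := Submodule.smul_mem _ _ w0.2
  have hworth : ∀ x ∈ S, ⟪x, w⟫ = 0 := fun x hx =>
    (Submodule.mem_orthogonal S w).mp hwperp x hx
  -- the candidate vector c
  set t : ℝ := Real.sqrt (1 - ⟪v, v⟫ / n) with ht_def
  have ht_sq : t * t = 1 - ⟪v, v⟫ / n := by
    apply Real.mul_self_sqrt
    have : ⟪v, v⟫ / n ≤ 1 := by
      rw [div_le_one hnpos]; exact hvle
    linarith
  set c : EuclideanSpace ℝ (Fin d) := (1 / sn) • v + t • w with hc_def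
  refine ⟨c, ?_, ?_⟩
  · -- norm of c is 1
    have hvw : ⟪(1 / sn) • v, t • w⟫ = 0 := by
      rw [real_inner_smul_left, real_inner_smul_right, hworth v hvS]; ring
    have h1 : ‖c‖ ^ 2 = ‖(1 / sn) • v‖ ^ 2 + ‖t • w‖ ^ 2 := by
      rw [hc_def, norm_add_sq_real, hvw]; ring
    have h2 : ‖(1 / sn) • v‖ ^ 2 = ⟪v, v⟫ / n := by
      rw [norm_smul, mul_pow, Real.norm_eq_abs,
        abs_of_pos (show (0:ℝ) < 1/sn by positivity), real_inner_self_eq_norm_sq]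
      rw [← hsn_sq]
      field_simp
    have ht_nn : 0 ≤ t := Real.sqrt_nonneg _
    have h3 : ‖t • w‖ ^ 2 = t * t := by
      rw [norm_smul, hwnorm, mul_one, Real.norm_eq_abs, abs_of_nonneg ht_nn]; ring
    have h4 : ‖c‖ ^ 2 = 1 := by rw [h1, h2, h3, ht_sq]; ring
    rw [← Real.sqrt_one, ← h4, Real.sqrt_sq (norm_nonneg c)]
  · -- the inequality
    have hqc : ∀ i, ⟪q i, c⟫ = ζ i / sn := by
      intro i
      rw [hc_def, inner_add_right, real_inner_smul_right, real_inner_smul_right,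
        hworth (q i) (hqS i)]
      rw [hv_def, hq.inner_right_fintype]
      ring
    have hpc : ∀ i, ⟪p i, c⟫ = (1 / sn) * ∑ j, ζ j * ⟪p i, q j⟫ := by
      intro i
      rw [hc_def, inner_add_right, real_inner_smul_right, real_inner_smul_right,
        hworth (p i) (hpS i)]
      rw [hv_def, inner_sum]
      simp only [real_inner_smul_right]
      ring
    -- bound the p-sum
    have hpsum : ∑ i, |⟪p i, c⟫| ≤ n * (1 / (2 * sn)) := by
      calc ∑ i, |⟪p i, c⟫| ≤ ∑ _i : Fin n, (1 / sn) * (1 / 2) := by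
            apply Finset.sum_le_sum
            intro i _
            rw [hpc i, abs_mul, abs_of_pos (by positivity)]
            exact mul_le_mul_of_nonneg_left (hdisc i) (by positivity)
        _ = n * (1 / (2 * sn)) := by
            rw [Finset.sum_const, Finset.card_univ, Fintype.card_fin, nsmul_eq_mul]
            ring
    -- bound the q-sum
    set Z : Finset (Fin n) := Finset.univ.filter (fun i => ζ i = 0) with hZ_def
    have hZcard : ({i : Fin n | ζ i = 0}.ncard : ℝ) = (Z.card : ℝ) := by
      norm_cast
      rw [Set.ncard_eq_toFinset_card']
      congr 1
      ext i
      simp [hZ_def]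
    have habs : ∀ i, |ζ i| = if ζ i = 0 then 0 else 1 := by
      intro i; rcases hζ i with h | h | h <;> simp [h]
    have hsumabs : ∑ i, |ζ i| = ((Finset.univ.filter (fun i => ¬ ζ i = 0)).card : ℝ) := by
      rw [Finset.sum_congr rfl (fun i _ => habs i)]
      rw [Finset.sum_ite, Finset.sum_const, Finset.sum_const]
      simp
    have hcards : Z.card + (Finset.univ.filter (fun i => ¬ ζ i = 0)).card = n := by
      rw [Finset.card_filter_add_card_filter_not]
      simp
    have hsum_lb : (3 * n) / 4 ≤ ∑ i, |ζ i| := by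
      rw [hsumabs]
      have h1 : ((Finset.univ.filter (fun i => ¬ ζ i = 0)).card : ℝ) = n - Z.card := by
        have := hcards
        push_cast [← this]
        ring
      rw [h1, ← hZcard] at *
      linarith [hζ0]
    have hqsum : (3 * n) / (4 * sn) ≤ ∑ i, |⟪q i, c⟫| := by
      have : ∑ i, |⟪q i, c⟫| = (∑ i, |ζ i|) / sn := by
        rw [Finset.sum_div]
        apply Finset.sum_congr rfl
        intro i _
        rw [hqc i, abs_div, abs_of_pos hsn_pos]
      rw [this]
      have h5 : (3 * (n:ℝ)) / (4 * sn) = ((3 * n) / 4) / sn := by ring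
      rw [h5]
      gcongr
    have key : (3 * (n:ℝ)) / (4 * sn) - n * (1 / (2 * sn)) = (1/4) * sn := by
      rw [← hsn_sq]; field_simp; ring
    linarith
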